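/- Let Q ⊆ ℤ^ℓ be an affine semigroup, Φ a face of Q, and let Γ be a congruence class in the localized semigroup Q + ℤΦ under a congruence of the form ~_{I[ℤΦ]} induced by a binomial ideal. Then Γ is infinite if and only if Γ contains two distinct elements v ≠ w with w - v ∈ Q + ℤΦ. -/

import Mathlib

/-- A binomial ideal in the monoid algebra `k[Q]`. -/
def IsBinomialIdeal {k Q : Type*} [Field k] [AddCommMonoid Q]
    (I : Ideal (AddMonoidAlgebra k Q)) : Prop :=
  ∃ S : Set (AddMonoidAlgebra k Q), I = Ideal.span S ∧
    ∀ f ∈ S, ∃ (u v : Q) (lam : k),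
      f = AddMonoidAlgebra.single u 1 - lam • AddMonoidAlgebra.single v 1

/-- The congruence `u ~_I v` iff `t^u - λ t^v ∈ I` for some nonzero `λ`. -/
def binomialRel {k Q : Type*} [Field k] [AddCommMonoid Q]
    (I : Ideal (AddMonoidAlgebra k Q)) (u v : Q) : Prop :=
  ∃ lam : k, lam ≠ 0 ∧
    AddMonoidAlgebra.single u 1 - lam • AddMonoidAlgebra.single v 1 ∈ I

section helpers

open AddMonoidAlgebra

variable {k Q : Type*} [Field k] [AddCommMonoid Q] (I : Ideal (AddMonoidAlgebra k Q))

lemma brel_trans {a b c : Q} (h1 : binomialRel I a b) (h2 : binomialRel I b c) :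
    binomialRel I a c := by
  obtain ⟨lam, hlam, h1⟩ := h1
  obtain ⟨mu, hmu, h2⟩ := h2
  refine ⟨lam * mu, mul_ne_zero hlam hmu, ?_⟩
  have key : AddMonoidAlgebra.single a 1 - (lam * mu) • AddMonoidAlgebra.single c 1
      = (AddMonoidAlgebra.single a 1 - lam • AddMonoidAlgebra.single b 1)
        + (AddMonoidAlgebra.single (0 : Q) lam) *
          (AddMonoidAlgebra.single b 1 - mu • AddMonoidAlgebra.single c 1) := by
    rw [mul_sub, AddMonoidAlgebra.single_mul_single, mul_smul_comm,
      AddMonoidAlgebra.single_mul_single, smul_single', smul_single', smul_single']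
    rw [zero_add, zero_add, mul_one, mul_one]
    ring_nf
  rw [key]
  exact I.add_mem h1 (I.mul_mem_left _ h2)

lemma brel_symm {a b : Q} (h : binomialRel I a b) : binomialRel I b a := by
  obtain ⟨lam, hlam, h⟩ := h
  refine ⟨lam⁻¹, inv_ne_zero hlam, ?_⟩
  have key : AddMonoidAlgebra.single b 1 - lam⁻¹ • AddMonoidAlgebra.single a 1
      = (AddMonoidAlgebra.single (0 : Q) (-lam⁻¹)) *
        (AddMonoidAlgebra.single a 1 - lam • AddMonoidAlgebra.single b 1) := by
    rw [mul_sub, AddMonoidAlgebra.single_mul_single, mul_smul_comm,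
      AddMonoidAlgebra.single_mul_single, smul_single', smul_single']
    rw [zero_add, zero_add, mul_one]
    have hneg : ∀ (x : Q) (c : k), AddMonoidAlgebra.single x (-c)
        = -AddMonoidAlgebra.single x c := fun x c => AddMonoidAlgebra.single_neg x c
    rw [show (-lam⁻¹ * 1 : k) = -lam⁻¹ from by ring,
      show lam * -lam⁻¹ = (-1 : k) from by field_simp, hneg, hneg]
    abel_nf
  rw [key]
  exact I.mul_mem_left _ h

lemma brel_translate {a b : Q} (d : Q) (h : binomialRel I a b) :
    binomialRel I (d + a) (d + b) := by
  obtain ⟨lam, hlam, h⟩ := h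
  refine ⟨lam, hlam, ?_⟩
  have key : AddMonoidAlgebra.single (d + a) (1:k) - lam • AddMonoidAlgebra.single (d + b) (1:k)
      = (AddMonoidAlgebra.single d (1:k)) *
        (AddMonoidAlgebra.single a 1 - lam • AddMonoidAlgebra.single b 1) := by
    rw [mul_sub, AddMonoidAlgebra.single_mul_single, mul_smul_comm,
      AddMonoidAlgebra.single_mul_single, one_mul]
  rw [key]
  exact I.mul_mem_left _ h

end helpers

theorem class_infinite_iff {ℓ : ℕ} {k : Type*} [Field k]
    (Q Φ : AddSubmonoid (Fin ℓ → ℤ)) (hQfg : Q.FG) (hΦQ : Φ ≤ Q)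
    (hface : ∀ a ∈ Q, ∀ b ∈ Q, a + b ∈ Φ → a ∈ Φ ∧ b ∈ Φ)
    (QΦ : AddSubmonoid (Fin ℓ → ℤ))
    (hQΦ : QΦ = Q ⊔ AddSubmonoid.closure (Neg.neg '' (Φ : Set (Fin ℓ → ℤ))))
    (I : Ideal (AddMonoidAlgebra k QΦ)) (hI : IsBinomialIdeal I)
    (Γ : Set QΦ) (u₀ : QΦ) (hΓ : Γ = {v | binomialRel I u₀ v}) :
    Γ.Infinite ↔ ∃ v ∈ Γ, ∃ w ∈ Γ, v ≠ w ∧ ((w : Fin ℓ → ℤ) - (v : Fin ℓ → ℤ)) ∈ QΦ := by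
  constructor
  · -- forward direction
    intro hinf
    obtain ⟨T, hT⟩ := hQfg
    -- the face Φ is generated by the generators of Q that lie in Φ
    set S₀ : Set (Fin ℓ → ℤ) := (↑T : Set (Fin ℓ → ℤ)) ∩ ↑Φ with hS₀
    have hΦgen : (Φ : Set (Fin ℓ → ℤ)) ⊆ ↑(AddSubmonoid.closure S₀) := by
      intro x hx
      have hxQ : x ∈ AddSubmonoid.closure (↑T : Set (Fin ℓ → ℤ)) := by rw [hT]; exact hΦQ hx
      refine AddSubmonoid.closure_induction
        (motive := fun y _ => y ∈ Φ → y ∈ AddSubmonoid.closure S₀) ?_ ?_ ?_ hxQ hx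
      · intro y hy hyΦ
        exact AddSubmonoid.subset_closure ⟨hy, hyΦ⟩
      · intro _; exact AddSubmonoid.zero_mem _
      · intro y z hy hz ihy ihz hyz
        have hyQ : y ∈ Q := by rw [← hT]; exact hy
        have hzQ : z ∈ Q := by rw [← hT]; exact hz
        obtain ⟨h1, h2⟩ := hface y hyQ z hzQ hyz
        exact AddSubmonoid.add_mem _ (ihy h1) (ihz h2)
    -- generating set for QΦ
    set G : Set (Fin ℓ → ℤ) := (↑T : Set (Fin ℓ → ℤ)) ∪ (Neg.neg '' S₀) with hG
    have hGfin : G.Finite := T.finite_toSet.union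
      ((T.finite_toSet.inter_of_left _).image _)
    have hGsub : G ⊆ ↑QΦ := by
      rw [hQΦ]
      rintro g (hg | ⟨x, hx, rfl⟩)
      · exact SetLike.le_def.mp le_sup_left (by rw [← hT]; exact AddSubmonoid.subset_closure hg)
      · exact SetLike.le_def.mp le_sup_right
          (AddSubmonoid.subset_closure (Set.mem_image_of_mem Neg.neg hx.2))
    have hQΦgen : (QΦ : Set (Fin ℓ → ℤ)) ⊆ ↑(AddSubmonoid.closure G) := by
      rw [hQΦ]
      refine SetLike.coe_subset_coe.mpr (sup_le ?_ ?_)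
      · rw [← hT]
        exact AddSubmonoid.closure_mono Set.subset_union_left
      · rw [AddSubmonoid.closure_le]
        rintro _ ⟨x, hx, rfl⟩
        have hx' : x ∈ AddSubmonoid.closure S₀ := hΦgen hx
        have hmap : negAddMonoidHom x ∈ (AddSubmonoid.closure S₀).map
            (negAddMonoidHom : (Fin ℓ → ℤ) →+ (Fin ℓ → ℤ)) :=
          AddSubmonoid.mem_map_of_mem _ hx'
        rw [AddMonoidHom.map_mclosure] at hmap
        have hx2 : -x ∈ AddSubmonoid.closure
            ((negAddMonoidHom : (Fin ℓ → ℤ) →+ (Fin ℓ → ℤ)) '' S₀) := hmap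
        refine SetLike.le_def.mp (AddSubmonoid.closure_mono ?_) hx2
        rintro _ ⟨y, hy, rfl⟩
        exact Or.inr ⟨y, hy, rfl⟩
    -- every element of QΦ is an ℕ-combination of elements of hGfin.toFinset
    have hrep : ∀ x : QΦ, ∃ c : (Fin ℓ → ℤ) → ℕ,
        (x : Fin ℓ → ℤ) = ∑ g ∈ hGfin.toFinset, c g • g := by
      intro x
      have hx : (x : Fin ℓ → ℤ) ∈ AddSubmonoid.closure G := hQΦgen x.2
      obtain ⟨l, hl, hsum⟩ := AddSubmonoid.exists_multiset_of_mem_closure hx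
      refine ⟨fun g => l.count g, ?_⟩
      rw [← hsum, Finset.sum_multiset_count]
      refine Finset.sum_subset ?_ ?_
      · intro g hg
        rw [Set.Finite.mem_toFinset]
        exact hl g (Multiset.mem_toFinset.mp hg)
      · intro g _ hg
        rw [Multiset.count_eq_zero_of_notMem (fun h => hg (Multiset.mem_toFinset.mpr h))]
        exact zero_smul ℕ g
    choose c hc using hrep
    -- an injection ℕ ↪ Γ
    have e := hinf.natEmbedding
    -- apply Dickson's lemma to coefficient vectors
    have hpwo : (Set.univ : Set ({g // g ∈ hGfin.toFinset} → ℕ)).IsPWO :=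
      Set.isPWO_univ_iff.mpr inferInstance
    obtain ⟨m, n, hmn, hle⟩ := Set.PartiallyWellOrderedOn.exists_lt hpwo
      (f := fun i (g : {g // g ∈ hGfin.toFinset}) => c ((e i).1) g.1) (fun _ => Set.mem_univ _)
    refine ⟨(e m).1, ?_, (e n).1, ?_, ?_, ?_⟩
    · exact (e m).2
    · exact (e n).2
    · intro h
      exact absurd (e.injective (Subtype.ext h)) hmn.ne
    · -- the difference is an ℕ-combination of the generators
      have hcle : ∀ g ∈ hGfin.toFinset, c ((e m).1) g ≤ c ((e n).1) g := by
        intro g hg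
        exact hle ⟨g, hg⟩
      have key : ((e n).1 : Fin ℓ → ℤ) - ((e m).1 : Fin ℓ → ℤ)
          = ∑ g ∈ hGfin.toFinset, (c ((e n).1) g - c ((e m).1) g) • g := by
        rw [hc ((e n).1), hc ((e m).1), ← Finset.sum_sub_distrib]
        refine Finset.sum_congr rfl fun g hg => ?_
        rw [sub_nsmul g (hcle g hg), sub_eq_add_neg]
      rw [key]
      refine AddSubmonoid.sum_mem _ fun g hg => ?_
      exact AddSubmonoid.nsmul_mem _ (hGsub (hGfin.mem_toFinset.mp hg)) _
  · -- backward direction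
    rintro ⟨v, hv, w, hw, hvw, hd⟩
    set d : QΦ := ⟨(w : Fin ℓ → ℤ) - (v : Fin ℓ → ℤ), hd⟩ with hdd
    have hvd : v + d = w := by
      ext
      simp [hdd]
    have hbrel_vw : binomialRel I v w := by
      rw [hΓ] at hv hw
      exact brel_trans I (brel_symm I hv) hw
    have hmem : ∀ n : ℕ, v + n • d ∈ Γ := by
      intro n
      induction n with
      | zero => simpa using hv
      | succ n ih =>
        rw [hΓ] at ih ⊢
        have step : binomialRel I (v + n • d) (v + (n + 1) • d) := by
          have := brel_translate I (n • d) hbrel_vw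
          have h1 : n • d + v = v + n • d := add_comm _ _
          have h2 : n • d + w = v + (n + 1) • d := by
            rw [← hvd, succ_nsmul]
            abel
          rwa [h1, h2] at this
        exact brel_trans I ih step
    have hinj : Function.Injective (fun n : ℕ => v + n • d) := by
      intro a b hab
      have hd0 : (d : Fin ℓ → ℤ) ≠ 0 := by
        simp only [hdd]
        exact sub_ne_zero.mpr (fun h => hvw (Subtype.ext h).symm)
      have hab' : a • d = b • d := by
        simpa using hab
      have hab'' : (a : ℤ) • (d : Fin ℓ → ℤ) = (b : ℤ) • (d : Fin ℓ → ℤ) := by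
        rw [natCast_zsmul, natCast_zsmul]
        exact_mod_cast congrArg (Subtype.val) hab'
      exact_mod_cast smul_left_injective ℤ hd0 hab''
    exact Set.infinite_of_injective_forall_mem hinj hmem
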